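/- arXiv:2406.02140 — 2 statements merged into one kernel-verified Lean document; each statement's English description precedes it below -/
import Mathlib

section
/- Let M : ℝ^n → (probability measures on ℝ^m) be any mechanism whose outputs have finite second moments, let A ∈ ℝ^{m×n}, let x ∈ ℝ^n, and let C > 0. If Var[θᵀM(x)] ≥ (w_{AB₁^n}(θ)/C)² for every θ ∈ ℝ^m, then AB₁^n ⊆↔ C·√(Σ_M(x))·B₂^m; that is, there exists v ∈ ℝ^m such that AB₁^n + v ⊆ { C·√(Σ_M(x))·u : ‖u‖₂ ≤ 1 }. -/
open MeasureTheory Matrix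
open scoped ENNReal

noncomputable section

namespace DPPaper

variable {ι κ : Type*}

/-- Two inputs `x, x' : ι → ℝ` are neighboring if `‖x - x'‖₁ ≤ 1`. -/
def Neighboring [Fintype ι] (x x' : ι → ℝ) : Prop :=
  ∑ i, |x i - x' i| ≤ 1

/-- A mechanism `M` (a map from inputs to probability measures on an output space `Ω`)
is `(ε,δ)`-differentially private if for all neighboring inputs and all measurable sets `S`,
`M x S ≤ e^ε · M x' S + δ`. -/
def IsDP [Fintype ι] {Ω : Type*} [MeasurableSpace Ω]
    (M : (ι → ℝ) → Measure Ω) (ε δ : ℝ) : Prop :=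
  ∀ x x' : ι → ℝ, Neighboring x x' → ∀ S : Set Ω, MeasurableSet S →
    M x S ≤ ENNReal.ofReal (Real.exp ε) * M x' S + ENNReal.ofReal δ

/-- The `ℓ_p^p`-error of a mechanism `M` on the query matrix `A`:
`sup_x (E_{Y ~ M x} [ ‖Y - A x‖_p^p ])^{1/p}`, valued in `ℝ≥0∞`. -/
def errLp [Fintype ι] [Fintype κ] (M : (ι → ℝ) → Measure (κ → ℝ))
    (A : Matrix κ ι ℝ) (p : ℝ) : ℝ≥0∞ :=
  ⨆ x : ι → ℝ,
    (∫⁻ y, ENNReal.ofReal (∑ i, |y i - A.mulVec x i| ^ p) ∂(M x)) ^ (1 / p)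

/-- The `q`-trace of a square matrix: `(∑ i, U i i ^ q)^{1/q}`. -/
def trq [Fintype κ] (q : ℝ) (U : Matrix κ κ ℝ) : ℝ :=
  (∑ i, (U i i) ^ q) ^ (1 / q)

/-- The `1 → 2` operator norm of a matrix: the largest `ℓ₂`-norm of a column. -/
def norm12 [Fintype ι] [Fintype κ] (R : Matrix κ ι ℝ) : ℝ :=
  ⨆ j : ι, Real.sqrt (∑ i, (R i j) ^ 2)

/-- The factorization norm `γ_{(p)}(A)`. -/
def gammaP [Fintype ι] [Fintype κ] (p : ℝ) (A : Matrix κ ι ℝ) : ℝ :=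
  sInf { c : ℝ | ∃ (k : ℕ) (L : Matrix κ (Fin k) ℝ) (R : Matrix (Fin k) ι ℝ),
    L * R = A ∧ c = Real.sqrt (trq (p / 2) (L * Lᵀ)) * norm12 R }

/-- The Schatten-1 norm of a matrix: the trace of the PSD square root of `Aᵀ * A`,
i.e. the sum of the singular values of `A`. -/
def schatten1 [Fintype ι] [Fintype κ] [DecidableEq ι] (A : Matrix κ ι ℝ) : ℝ :=
  ((Matrix.posSemidef_conjTranspose_mul_self A).1.eigenvectorUnitary.1 *
    diagonal ((RCLike.ofReal : ℝ → ℝ) ∘ Real.sqrt ∘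
      (Matrix.posSemidef_conjTranspose_mul_self A).1.eigenvalues) *
    (star (Matrix.posSemidef_conjTranspose_mul_self A).1.eigenvectorUnitary : Matrix ι ι ℝ)).trace

/-- The sensitivity polytope `A B₁^n = {A x : ‖x‖₁ ≤ 1}`. -/
def sensPolytope [Fintype ι] (A : Matrix κ ι ℝ) : Set (κ → ℝ) :=
  {v | ∃ x : ι → ℝ, (∑ i, |x i|) ≤ 1 ∧ v = A.mulVec x}

/-- The width of a set `K` in direction `θ`. -/
def width [Fintype κ] (K : Set (κ → ℝ)) (θ : κ → ℝ) : ℝ :=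
  sSup ((fun v => ∑ i, θ i * v i) '' K) - sInf ((fun v => ∑ i, θ i * v i) '' K)

/-- `κ(A)`: the minimal width of the sensitivity polytope over all unit directions. -/
def kappa [Fintype ι] [Fintype κ] (A : Matrix κ ι ℝ) : ℝ :=
  sInf { c : ℝ | ∃ θ : κ → ℝ, (∑ i, (θ i) ^ 2) = 1 ∧ c = width (sensPolytope A) θ }

/-- The prefix-sum (continual counting) matrix: lower-triangular all ones. -/
def Aprefix (n : ℕ) : Matrix (Fin n) (Fin n) ℝ :=
  fun i j => if j ≤ i then 1 else 0

/-- The covariance matrix of a measure on `κ → ℝ`. -/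
def covMatrix [Fintype κ] (μ : Measure (κ → ℝ)) : Matrix κ κ ℝ :=
  fun i j => ∫ y, (y i - ∫ y', y' i ∂μ) * (y j - ∫ y', y' j ∂μ) ∂μ

/-- The parity query matrix `Q_{d,w}`: rows indexed by `w`-element subsets `P` of `{1,…,d}`,
columns indexed by points of `{-1,1}^d` (encoded as `Fin d → Bool`), entry `∏_{i ∈ P} x_i`. -/
def parityMatrix (d w : ℕ) : Matrix {P : Finset (Fin d) // P.card = w} (Fin d → Bool) ℝ :=
  fun P b => ∏ i ∈ P.1, (if b i then (1 : ℝ) else -1)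

/-- The Hadamard matrices: `H_0 = [1]`, `H_{d+1} = [[H_d, H_d], [H_d, -H_d]]`. -/
def Hadamard : (d : ℕ) → Matrix (Fin (2 ^ d)) (Fin (2 ^ d)) ℝ
  | 0 => fun _ _ => 1
  | (d + 1) =>
    Matrix.reindex
      (finSumFinEquiv.trans (finCongr (by rw [pow_succ, mul_two])))
      (finSumFinEquiv.trans (finCongr (by rw [pow_succ, mul_two])))
      (Matrix.fromBlocks (Hadamard d) (Hadamard d) (Hadamard d) (-(Hadamard d)))

end DPPaper

open DPPaper

open MeasureTheory Matrix in
private lemma my_symm_surj {E : Type*} [NormedAddCommGroup E] [InnerProductSpace ℝ E]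
    [FiniteDimensional ℝ E] (T : E →ₗ[ℝ] E)
    (hsym : ∀ a b : E, inner ℝ (T a) b = inner ℝ a (T b)) (u : E)
    (hu : ∀ z : E, T z = 0 → inner ℝ z u = 0) : ∃ θ : E, T θ = u := by
  have h1 : (LinearMap.range T)ᗮ ≤ LinearMap.ker T := by
    intro y hy
    have h0 : inner ℝ (T (T y)) y = 0 := hy (T (T y)) ⟨T y, rfl⟩
    rw [hsym] at h0
    have h2 : inner ℝ (T y) (T y) = 0 := by rw [real_inner_comm] at h0; exact h0
    exact LinearMap.mem_ker.2 (inner_self_eq_zero.mp h2)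
  have h2 : (LinearMap.ker T)ᗮ ≤ LinearMap.range T := by
    calc (LinearMap.ker T)ᗮ ≤ ((LinearMap.range T)ᗮ)ᗮ := Submodule.orthogonal_le h1
    _ = LinearMap.range T := Submodule.orthogonal_orthogonal _
  exact h2 ((Submodule.mem_orthogonal _ _).2 fun z hz => hu z hz)

open MeasureTheory Matrix in
private lemma my_cov_quad_form {m : ℕ} (ν : Measure (Fin m → ℝ)) [IsProbabilityMeasure ν]
    (hmom : ∀ i, Integrable (fun y => (y i) ^ 2) ν) (θ : Fin m → ℝ) :
    θ ⬝ᵥ (DPPaper.covMatrix ν).mulVec θ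
      = ∫ y, (∑ i, θ i * (y i - ∫ y', y' i ∂ν)) ^ 2 ∂ν := by
  set mu : Fin m → ℝ := fun i => ∫ y', y' i ∂ν with hmu
  have hL2 : ∀ i, MemLp (fun y : Fin m → ℝ => y i) 2 ν := fun i =>
    (memLp_two_iff_integrable_sq (measurable_pi_apply i).aestronglyMeasurable).2 (hmom i)
  have hL2c : ∀ i, MemLp (fun y : Fin m → ℝ => y i - mu i) 2 ν := fun i =>
    (hL2 i).sub (memLp_const _)
  have hIntProd : ∀ i j, Integrable (fun y : Fin m → ℝ => (y i - mu i) * (y j - mu j)) ν := by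
    intro i j
    have h : MemLp ((fun y : Fin m → ℝ => y i - mu i) • (fun y : Fin m → ℝ => y j - mu j)) 1 ν :=
      (hL2c j).smul (hL2c i)
    rw [memLp_one_iff_integrable] at h
    exact h
  have hrhs : (∫ y, (∑ i, θ i * (y i - mu i)) ^ 2 ∂ν)
      = ∑ i, ∑ j, θ i * θ j * ∫ y, (y i - mu i) * (y j - mu j) ∂ν := by
    have hint : ∀ y : Fin m → ℝ, (∑ i, θ i * (y i - mu i)) ^ 2
        = ∑ i, ∑ j, θ i * θ j * ((y i - mu i) * (y j - mu j)) := by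
      intro y
      rw [sq, Finset.sum_mul_sum]
      exact Finset.sum_congr rfl fun i _ => Finset.sum_congr rfl fun j _ => by ring
    simp_rw [hint]
    rw [integral_finset_sum _ (fun i _ => integrable_finset_sum _
      (fun j _ => ((hIntProd i j).const_mul _)))]
    exact Finset.sum_congr rfl fun i _ => by
      rw [integral_finset_sum _ (fun j _ => ((hIntProd i j).const_mul _))]
      exact Finset.sum_congr rfl fun j _ => integral_const_mul _ _
  rw [hrhs]
  simp only [dotProduct, Matrix.mulVec, DPPaper.covMatrix, ← hmu]
  refine Finset.sum_congr rfl fun i _ => ?_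
  rw [Finset.mul_sum]
  refine Finset.sum_congr rfl fun j _ => ?_
  simp only [hmu]
  ring


/-- if all one-dimensional marginals of M(x) have variance at least
  (w_{AB₁ⁿ}(θ)/C)², then the sensitivity polytope is covered by a translate of
  C·√(Σ_M(x))·B₂^m.  (√(Σ_M(x)) is characterized as the PSD matrix W with W·W = Σ_M(x).) -/
theorem cov_covers_sensitivity_polytope (m n : ℕ)
    (M : (Fin n → ℝ) → Measure (Fin m → ℝ))
    (hprob : ∀ x, IsProbabilityMeasure (M x))
    (hmom : ∀ x i, Integrable (fun y => (y i) ^ 2) (M x))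
    (A : Matrix (Fin m) (Fin n) ℝ) (x : Fin n → ℝ) (C : ℝ) (hC : 0 < C)
    (hvar : ∀ θ : Fin m → ℝ,
      (∫ y, ((∑ i, θ i * y i) - ∫ y', ∑ i, θ i * y' i ∂(M x)) ^ 2 ∂(M x))
        ≥ (width (sensPolytope A) θ / C) ^ 2) :
    ∀ W : Matrix (Fin m) (Fin m) ℝ, W.PosSemidef → W * W = covMatrix (M x) →
      ∃ v : Fin m → ℝ, ∀ u ∈ sensPolytope A,
        ∃ b : Fin m → ℝ, (∑ i, (b i) ^ 2) ≤ 1 ∧ u + v = C • W.mulVec b := by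
  intro W hW hWW
  haveI := hprob x
  have hWt : Wᵀ = W := by
    have h : Wᴴ = W := hW.1
    rwa [Matrix.conjTranspose_eq_transpose_of_trivial] at h
  set ν := M x with hν
  set mu : Fin m → ℝ := fun i => ∫ y', y' i ∂ν with hmu
  have hL2 : ∀ i, MemLp (fun y : Fin m → ℝ => y i) 2 ν := fun i =>
    (memLp_two_iff_integrable_sq (measurable_pi_apply i).aestronglyMeasurable).2 (hmom x i)
  have hInt : ∀ i, Integrable (fun y : Fin m → ℝ => y i) ν := fun i =>
    (hL2 i).integrable one_le_two
  have varform : ∀ θ : Fin m → ℝ,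
      (∫ y, ((∑ i, θ i * y i) - ∫ y', ∑ i, θ i * y' i ∂ν) ^ 2 ∂ν)
        = θ ⬝ᵥ (covMatrix ν).mulVec θ := by
    intro θ
    rw [my_cov_quad_form ν (hmom x) θ]
    have hmean : (∫ y', ∑ i, θ i * y' i ∂ν) = ∑ i, θ i * mu i := by
      rw [integral_finset_sum _ (fun i _ => (hInt i).const_mul (θ i))]
      exact Finset.sum_congr rfl fun i _ => integral_const_mul _ _
    rw [hmean]
    congr 1
    funext y
    rw [← Finset.sum_sub_distrib]
    refine congrArg (· ^ 2) (Finset.sum_congr rfl fun i _ => ?_)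
    simp only [hmu]
    ring
  have hquadW : ∀ θ : Fin m → ℝ,
      θ ⬝ᵥ (covMatrix ν).mulVec θ = W.mulVec θ ⬝ᵥ W.mulVec θ := by
    intro θ
    rw [← hWW, ← Matrix.mulVec_mulVec, dotProduct_mulVec θ, ← Matrix.mulVec_transpose,
      hWt]
  refine ⟨0, ?_⟩
  intro u hu
  obtain ⟨z, hz1, hz2⟩ := hu
  have key : ∀ θ : Fin m → ℝ, θ ⬝ᵥ u ≤ C * Real.sqrt (W.mulVec θ ⬝ᵥ W.mulVec θ) := by
    intro θ
    by_cases hpos : θ ⬝ᵥ u ≤ 0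
    · exact hpos.trans (mul_nonneg hC.le (Real.sqrt_nonneg _))
    push_neg at hpos
    set f : (Fin m → ℝ) → ℝ := fun v => ∑ i, θ i * v i with hf
    set S := f '' sensPolytope A with hS
    set B : ℝ := ∑ j, |∑ i, θ i * A i j| with hB
    have habs : ∀ a ∈ S, |a| ≤ B := by
      rintro a ⟨v, ⟨w, hw1, rfl⟩, rfl⟩
      have hfv : f (A.mulVec w) = ∑ j, (∑ i, θ i * A i j) * w j := by
        simp only [hf, Matrix.mulVec, dotProduct, Finset.mul_sum, Finset.sum_mul]
        rw [Finset.sum_comm]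
        exact Finset.sum_congr rfl fun j _ => Finset.sum_congr rfl fun i _ => by ring
      rw [hfv]
      calc |∑ j, (∑ i, θ i * A i j) * w j| ≤ ∑ j, |(∑ i, θ i * A i j) * w j| :=
            Finset.abs_sum_le_sum_abs _ _
        _ ≤ B := by
            refine Finset.sum_le_sum fun j _ => ?_
            rw [abs_mul]
            have hwj : |w j| ≤ 1 :=
              le_trans (Finset.single_le_sum (f := fun k => |w k|)
                (fun k _ => abs_nonneg _) (Finset.mem_univ j)) hw1
            exact mul_le_of_le_one_right (abs_nonneg _) hwj
    have hmem : θ ⬝ᵥ u ∈ S := ⟨u, ⟨z, hz1, hz2⟩, rfl⟩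
    have hmemneg : -(θ ⬝ᵥ u) ∈ S := by
      refine ⟨-u, ⟨-z, by simpa using hz1, by rw [hz2, Matrix.mulVec_neg]⟩, ?_⟩
      simp only [hf, Pi.neg_apply, dotProduct]
      rw [← Finset.sum_neg_distrib]
      exact Finset.sum_congr rfl fun i _ => by ring
    have hba : BddAbove S := ⟨B, fun a ha => (le_abs_self a).trans (habs a ha)⟩
    have hbb : BddBelow S := ⟨-B, fun a ha => neg_le_of_neg_le (by
      have := (abs_le.mp (habs a ha)).1; linarith)⟩
    have hsup : θ ⬝ᵥ u ≤ sSup S := le_csSup hba hmem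
    have hinf : sInf S ≤ -(θ ⬝ᵥ u) := csInf_le hbb hmemneg
    have hwid : width (sensPolytope A) θ = sSup S - sInf S := rfl
    have hwidth : 2 * (θ ⬝ᵥ u) ≤ width (sensPolytope A) θ := by
      rw [hwid]; linarith
    have hq : (width (sensPolytope A) θ / C) ^ 2 ≤ W.mulVec θ ⬝ᵥ W.mulVec θ := by
      have h1 := hvar θ
      rw [varform θ, hquadW θ] at h1
      exact h1
    have hwnn : 0 ≤ width (sensPolytope A) θ := by linarith
    have hle : width (sensPolytope A) θ / C ≤ Real.sqrt (W.mulVec θ ⬝ᵥ W.mulVec θ) := by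
      have h2 := Real.sqrt_le_sqrt hq
      rwa [Real.sqrt_sq (div_nonneg hwnn hC.le)] at h2
    have h3 : width (sensPolytope A) θ ≤ Real.sqrt (W.mulVec θ ⬝ᵥ W.mulVec θ) * C :=
      (div_le_iff₀ hC).mp hle
    linarith
  have key0 : ∀ θ : Fin m → ℝ, W.mulVec θ = 0 → θ ⬝ᵥ u = 0 := by
    intro θ h0
    have h1 := key θ
    have h2 := key (-θ)
    simp only [Matrix.mulVec_neg, neg_dotProduct, dotProduct_neg, neg_neg, h0,
      dotProduct_zero, neg_zero, Real.sqrt_zero, mul_zero] at h1 h2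
    linarith
  let T : EuclideanSpace ℝ (Fin m) →ₗ[ℝ] EuclideanSpace ℝ (Fin m) :=
    (WithLp.linearEquiv 2 ℝ (Fin m → ℝ)).symm.toLinearMap ∘ₗ (covMatrix ν).mulVecLin ∘ₗ
      (WithLp.linearEquiv 2 ℝ (Fin m → ℝ)).toLinearMap
  have hcovsym : ∀ i j, covMatrix ν i j = covMatrix ν j i := by
    intro i j
    simp only [covMatrix]
    congr 1
    funext y
    ring
  have hTsym : ∀ a b : EuclideanSpace ℝ (Fin m), inner ℝ (T a) b = inner ℝ a (T b) := by
    intro a b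
    simp only [T, LinearMap.coe_comp, LinearEquiv.coe_coe, Function.comp_apply,
      WithLp.linearEquiv_apply, WithLp.linearEquiv_symm_apply, Matrix.mulVecLin_apply,
      PiLp.inner_apply, RCLike.inner_apply, conj_trivial]
    show ∑ i, b i * (covMatrix ν).mulVec a i = ∑ i, (covMatrix ν).mulVec b i * a i
    simp only [Matrix.mulVec, dotProduct, Finset.sum_mul, Finset.mul_sum]
    rw [Finset.sum_comm]
    exact Finset.sum_congr rfl fun i _ => Finset.sum_congr rfl fun j _ => by
      rw [hcovsym j i]; ring
  have hTker : ∀ zv : EuclideanSpace ℝ (Fin m), T zv = 0 →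
      inner ℝ zv ((WithLp.equiv 2 (Fin m → ℝ)).symm u) = 0 := by
    intro zv h0
    have hcz : (covMatrix ν).mulVec zv = 0 := congrArg WithLp.ofLp h0
    have hWz : W.mulVec zv = 0 := by
      have hq0 : W.mulVec zv ⬝ᵥ W.mulVec zv = 0 := by
        rw [← hquadW zv, hcz, dotProduct_zero]
      exact dotProduct_self_eq_zero.mp hq0
    have := key0 zv hWz
    simpa [PiLp.inner_apply, RCLike.inner_apply, dotProduct, mul_comm] using this
  obtain ⟨θ₀, hθ₀⟩ := my_symm_surj T hTsym ((WithLp.equiv 2 (Fin m → ℝ)).symm u) hTker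
  have hcu : (covMatrix ν).mulVec θ₀ = u := congrArg WithLp.ofLp hθ₀
  set w : Fin m → ℝ := W.mulVec θ₀ with hwdef
  have hqnn : 0 ≤ w ⬝ᵥ w := Finset.sum_nonneg fun i _ => mul_self_nonneg _
  have hθu : (θ₀ : Fin m → ℝ) ⬝ᵥ u = w ⬝ᵥ w := by
    rw [← hcu]; exact hquadW θ₀
  have hkey := key θ₀
  rw [hθu] at hkey
  have hsqle : w ⬝ᵥ w ≤ C ^ 2 := by
    have hs : Real.sqrt (w ⬝ᵥ w) ^ 2 = w ⬝ᵥ w := Real.sq_sqrt hqnn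
    nlinarith [Real.sqrt_nonneg (w ⬝ᵥ w), sq_nonneg (C - Real.sqrt (w ⬝ᵥ w))]
  refine ⟨C⁻¹ • w, ?_, ?_⟩
  · have hb : ∑ i, (C⁻¹ • w) i ^ 2 = C⁻¹ ^ 2 * (w ⬝ᵥ w) := by
      simp only [Pi.smul_apply, smul_eq_mul, dotProduct, Finset.mul_sum]
      exact Finset.sum_congr rfl fun i _ => by ring
    rw [hb, inv_pow]
    have h4 : (C ^ 2)⁻¹ * (w ⬝ᵥ w) ≤ (C ^ 2)⁻¹ * C ^ 2 :=
      mul_le_mul_of_nonneg_left hsqle (by positivity)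
    rwa [inv_mul_cancel₀ (by positivity : (C : ℝ) ^ 2 ≠ 0)] at h4
  · rw [Matrix.mulVec_smul, smul_smul, mul_inv_cancel₀ hC.ne', one_smul, hwdef,
      Matrix.mulVec_mulVec, hWW, hcu, add_zero]
end
end

section
/- For every matrix A ∈ ℝ^{m×n} and every p ∈ [2, ∞), γ_{(p)}(A) ≥ m^{1/p} ‖A‖₁ / √(mn), i.e., γ_{(p)}(A) ≥ m^{1/p − 1/2} ‖A‖₁ / √n. -/
open MeasureTheory Matrix
open scoped ENNReal

noncomputable section

open DPPaper

section Frob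
open Matrix

lemma trace_mul_le_aux {m : ℕ} {M N : Matrix (Fin m) (Fin m) ℝ} (hM : M.PosSemidef)
    (hN : ∀ x : Fin m → ℝ, x ⬝ᵥ N *ᵥ x ≤ x ⬝ᵥ x) : (M * N).trace ≤ M.trace := by
  obtain ⟨S, hHerm, hSS⟩ : ∃ S : Matrix (Fin m) (Fin m) ℝ, S.IsHermitian ∧ S * S = M :=
    by
      open scoped MatrixOrder in
      obtain ⟨X, hX, -, hXX⟩ := CFC.exists_sqrt_of_isSelfAdjoint_of_quasispectrumRestricts
        hM.1 (QuasispectrumRestricts.nnreal_of_nonneg (Matrix.nonneg_iff_posSemidef.2 hM))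
      exact ⟨X, hX, by simpa using hXX⟩
  have hsym : ∀ i j, S i j = S j i := by
    intro i j
    have := congrFun (congrFun hHerm i) j
    simpa [Matrix.conjTranspose_apply] using this.symm
  have key : (M * N).trace = (S * N * S).trace := by
    rw [← hSS, Matrix.mul_assoc, Matrix.trace_mul_comm S (S * N), Matrix.mul_assoc,
      Matrix.trace_mul_comm S (N * S), Matrix.mul_assoc]
  rw [key]
  unfold Matrix.trace
  apply Finset.sum_le_sum
  intro i _
  have h1 : (S * N * S).diag i = (fun a => S a i) ⬝ᵥ N *ᵥ (fun a => S a i) := by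
    simp only [Matrix.diag, Matrix.mul_apply, dotProduct, Matrix.mulVec,
      Finset.sum_mul, Finset.mul_sum]
    rw [Finset.sum_comm]
    apply Finset.sum_congr rfl; intro a _
    apply Finset.sum_congr rfl; intro b _
    rw [hsym i a]; ring
  have h2 : (fun a => S a i) ⬝ᵥ (fun a => S a i) = M.diag i := by
    simp only [Matrix.diag, ← hSS, Matrix.mul_apply, dotProduct]
    apply Finset.sum_congr rfl; intro a _
    rw [hsym i a]
  rw [h1, ← h2]
  exact hN _

lemma schatten1_eq_sum {m n : ℕ} (A : Matrix (Fin m) (Fin n) ℝ) :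
    schatten1 A = ∑ j, Real.sqrt ((Matrix.posSemidef_conjTranspose_mul_self A).1.eigenvalues j) := by
  set hP := Matrix.posSemidef_conjTranspose_mul_self A
  have : schatten1 A = (hP.1.eigenvectorUnitary.1 *
      Matrix.diagonal (Real.sqrt ∘ hP.1.eigenvalues) * (star hP.1.eigenvectorUnitary.1)).trace := by
    rfl
  rw [this, Matrix.trace_mul_cycle]
  have hu : (star hP.1.eigenvectorUnitary.1) * hP.1.eigenvectorUnitary.1 = 1 := by
    simp
  rw [hu, Matrix.one_mul, Matrix.trace_diagonal]
  rfl

lemma sumsq_eq_trace {k n : ℕ} (X : Matrix (Fin k) (Fin n) ℝ) :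
    ∑ q : Fin n × Fin k, (X q.2 q.1) ^ 2 = (Xᴴ * X).trace := by
  rw [Matrix.trace, ← Finset.univ_product_univ, Finset.sum_product]
  apply Finset.sum_congr rfl; intro j _
  rw [Matrix.diag_apply, Matrix.mul_apply]
  apply Finset.sum_congr rfl; intro b _
  rw [Matrix.conjTranspose_apply, star_trivial, pow_two]

set_option maxHeartbeats 1000000 in
lemma schatten1_le_frob {m n k : ℕ} (L : Matrix (Fin m) (Fin k) ℝ)
    (R : Matrix (Fin k) (Fin n) ℝ) :
    schatten1 (L * R) ≤ Real.sqrt (L * Lᴴ).trace * Real.sqrt (Rᴴ * R).trace := by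
  set A := L * R with hA
  have hP := Matrix.posSemidef_conjTranspose_mul_self A
  set hH : (Aᴴ * A).IsHermitian := hP.1 with hHdef
  set U : Matrix (Fin n) (Fin n) ℝ := hH.eigenvectorUnitary.1 with hUdef
  set d : Fin n → ℝ := hH.eigenvalues with hddef
  have hd0 : ∀ j, 0 ≤ d j := fun j => hP.eigenvalues_nonneg j
  have hUstar : Uᴴ * U = 1 := by
    rw [← Matrix.star_eq_conjTranspose]
    exact Unitary.coe_star_mul_self hH.eigenvectorUnitary
  have hUstar2 : U * Uᴴ = 1 := by
    rw [← Matrix.star_eq_conjTranspose]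
    exact Unitary.coe_mul_star_self hH.eigenvectorUnitary
  have hspec : Aᴴ * A = U * Matrix.diagonal d * Uᴴ := by
    have := hH.spectral_theorem
    rw [RCLike.ofReal_real_eq_id, Function.id_comp] at this
    rw [this, Unitary.conjStarAlgAut_apply, Matrix.star_eq_conjTranspose]
  set D' : Matrix (Fin n) (Fin n) ℝ := Matrix.diagonal (fun j => (Real.sqrt (d j))⁻¹) with hD'
  set W : Matrix (Fin m) (Fin n) ℝ := A * U * D' with hWdef
  have hD'H : D'ᴴ = D' := by
    rw [hD', Matrix.diagonal_conjTranspose]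
    congr 1
  have hWT : Wᴴ = D' * (Uᴴ * Aᴴ) := by
    rw [hWdef, Matrix.conjTranspose_mul, Matrix.conjTranspose_mul, hD'H]
  have hmid : Uᴴ * (Aᴴ * A) * U = Matrix.diagonal d := by
    rw [hspec, ← Matrix.mul_assoc, ← Matrix.mul_assoc, hUstar, Matrix.one_mul,
      Matrix.mul_assoc, hUstar, Matrix.mul_one]
  have hWAU : Wᴴ * (A * U) = Matrix.diagonal (fun j => Real.sqrt (d j)) := by
    rw [hWT]
    have h0 : D' * (Uᴴ * Aᴴ) * (A * U) = D' * (Uᴴ * (Aᴴ * A) * U) := by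
      simp only [Matrix.mul_assoc]
    rw [h0, hmid, hD', Matrix.diagonal_mul_diagonal]
    refine congrArg Matrix.diagonal (funext fun j => ?_)
    show (Real.sqrt (d j))⁻¹ * d j = Real.sqrt (d j)
    rcases eq_or_lt_of_le (hd0 j) with h | h
    · rw [← h]; simp
    · have hs : Real.sqrt (d j) ≠ 0 := ne_of_gt (Real.sqrt_pos.mpr h)
      rw [inv_mul_eq_div, div_eq_iff hs]
      exact (Real.mul_self_sqrt (hd0 j)).symm
  have hWW : Wᴴ * W =
      Matrix.diagonal (fun j => (Real.sqrt (d j))⁻¹ * d j * (Real.sqrt (d j))⁻¹) := by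
    rw [hWT, hWdef]
    have h0 : D' * (Uᴴ * Aᴴ) * (A * U * D') = D' * (Uᴴ * (Aᴴ * A) * U) * D' := by
      simp only [Matrix.mul_assoc]
    rw [h0, hmid, hD', Matrix.diagonal_mul_diagonal, Matrix.diagonal_mul_diagonal]
  have he1 : ∀ j, (Real.sqrt (d j))⁻¹ * d j * (Real.sqrt (d j))⁻¹ ≤ 1 := by
    intro j
    rcases eq_or_lt_of_le (hd0 j) with h | h
    · rw [← h]; simp
    · have hs : Real.sqrt (d j) ≠ 0 := ne_of_gt (Real.sqrt_pos.mpr h)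
      have hm : Real.sqrt (d j) * Real.sqrt (d j) = d j := Real.mul_self_sqrt (hd0 j)
      rw [mul_comm, ← mul_assoc, ← mul_inv]
      rw [hm, inv_mul_cancel₀ (by positivity)]
  have hgen : ∀ z : Fin m → ℝ, Wᴴ *ᵥ z = z ᵥ* W := by
    intro z
    rw [Matrix.mulVec_conjTranspose]
    simp only [star_trivial]
  have hquad : ∀ x : Fin m → ℝ, x ⬝ᵥ (W * Wᴴ) *ᵥ x ≤ x ⬝ᵥ x := by
    intro x
    set y : Fin n → ℝ := Wᴴ *ᵥ x with hy
    have h1 : x ⬝ᵥ (W * Wᴴ) *ᵥ x = y ⬝ᵥ y := by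
      rw [← Matrix.mulVec_mulVec, Matrix.dotProduct_mulVec, hy, hgen]
    have hWy : (W *ᵥ y) ⬝ᵥ (W *ᵥ y) ≤ y ⬝ᵥ y := by
      have h2 : (W *ᵥ y) ⬝ᵥ (W *ᵥ y) = ((Wᴴ * W) *ᵥ y) ⬝ᵥ y := by
        rw [Matrix.dotProduct_mulVec, ← hgen, Matrix.mulVec_mulVec]
      rw [h2, hWW]
      unfold dotProduct
      apply Finset.sum_le_sum
      intro j _
      rw [Matrix.mulVec_diagonal]
      nlinarith [mul_self_nonneg (y j), he1 j, hd0 j,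
        mul_self_nonneg (y j * ((Real.sqrt (d j))⁻¹))]
    have hyx : y ⬝ᵥ y = (W *ᵥ y) ⬝ᵥ x := by
      nth_rewrite 2 [hy]
      rw [Matrix.dotProduct_mulVec, Matrix.vecMul_conjTranspose]
      simp
    have hcs : (y ⬝ᵥ y) ^ 2 ≤ ((W *ᵥ y) ⬝ᵥ (W *ᵥ y)) * (x ⬝ᵥ x) := by
      rw [hyx]
      have := Finset.sum_mul_sq_le_sq_mul_sq Finset.univ (W *ᵥ y) x
      simp only [pow_two] at this ⊢
      unfold dotProduct
      simpa [pow_two] using this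
    have hynn : 0 ≤ y ⬝ᵥ y := Finset.sum_nonneg fun i _ => mul_self_nonneg _
    have hxnn : 0 ≤ x ⬝ᵥ x := Finset.sum_nonneg fun i _ => mul_self_nonneg _
    rw [h1]
    nlinarith [hcs, hWy, hynn, hxnn]
  -- expressing schatten1 as a sum of products
  have hdiag : ∀ j, Real.sqrt (d j) = ∑ b, (Lᴴ * W) b j * (R * U) b j := by
    intro j
    have h1 : Real.sqrt (d j) = (Wᴴ * (A * U)) j j := by
      rw [hWAU, Matrix.diagonal_apply_eq]
    rw [h1]
    have h2 : Wᴴ * (A * U) = (Wᴴ * L) * (R * U) := by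
      rw [hA]; simp only [Matrix.mul_assoc]
    rw [h2, Matrix.mul_apply]
    apply Finset.sum_congr rfl; intro b _
    congr 1
    rw [Matrix.mul_apply, Matrix.mul_apply]
    apply Finset.sum_congr rfl; intro a _
    rw [Matrix.conjTranspose_apply, Matrix.conjTranspose_apply, star_trivial, star_trivial,
      mul_comm]
  have hsum1 : ∑ q : Fin n × Fin k, ((Lᴴ * W) q.2 q.1) ^ 2 ≤ (L * Lᴴ).trace := by
    have e1 := sumsq_eq_trace (Lᴴ * W)
    have e2 : (Lᴴ * W)ᴴ * (Lᴴ * W) = Wᴴ * (L * Lᴴ) * W := by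
      rw [Matrix.conjTranspose_mul, Matrix.conjTranspose_conjTranspose]
      simp only [Matrix.mul_assoc]
    have e3 : (Wᴴ * (L * Lᴴ) * W).trace = ((L * Lᴴ) * (W * Wᴴ)).trace := by
      rw [Matrix.trace_mul_cycle, Matrix.trace_mul_comm]
    rw [e1, e2, e3]
    exact trace_mul_le_aux (Matrix.posSemidef_self_mul_conjTranspose L) hquad
  have hsum2 : ∑ q : Fin n × Fin k, ((R * U) q.2 q.1) ^ 2 = (Rᴴ * R).trace := by
    have e1 := sumsq_eq_trace (R * U)
    have e2 : (R * U)ᴴ * (R * U) = Uᴴ * (Rᴴ * R) * U := by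
      rw [Matrix.conjTranspose_mul]
      simp only [Matrix.mul_assoc]
    have e3 : (Uᴴ * (Rᴴ * R) * U).trace = (Rᴴ * R).trace := by
      rw [Matrix.trace_mul_cycle, hUstar2, Matrix.one_mul]
    rw [e1, e2, e3]
  have hCS := Real.sum_mul_le_sqrt_mul_sqrt Finset.univ
    (fun q : Fin n × Fin k => (Lᴴ * W) q.2 q.1) (fun q => (R * U) q.2 q.1)
  have hstart : schatten1 A = ∑ q : Fin n × Fin k, (Lᴴ * W) q.2 q.1 * (R * U) q.2 q.1 := by
    rw [schatten1_eq_sum A]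
    have : ∀ j, (Matrix.posSemidef_conjTranspose_mul_self A).1.eigenvalues j = d j :=
      fun j => rfl
    calc ∑ j, Real.sqrt ((Matrix.posSemidef_conjTranspose_mul_self A).1.eigenvalues j)
        = ∑ j, ∑ b, (Lᴴ * W) b j * (R * U) b j := by
          apply Finset.sum_congr rfl; intro j _; rw [this j, hdiag j]
      _ = _ := by rw [← Finset.univ_product_univ, Finset.sum_product]
  rw [hstart]
  refine le_trans hCS ?_
  apply mul_le_mul (Real.sqrt_le_sqrt hsum1) (le_of_eq (by rw [hsum2]))
    (Real.sqrt_nonneg _) (Real.sqrt_nonneg _)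
end Frob

section MainAux
open Matrix

lemma sum_le_rpow_sum {m : ℕ} (hm : 0 < m) (a : Fin m → ℝ) (ha : ∀ i, 0 ≤ a i) {q : ℝ}
    (hq : 1 ≤ q) :
    ∑ i, a i ≤ (m : ℝ) ^ ((1 : ℝ) - 1 / q) * (∑ i, a i ^ q) ^ (1 / q) := by
  have hM : (0 : ℝ) < (m : ℝ) := by exact_mod_cast hm
  have hq0 : q ≠ 0 := by linarith
  have key := Real.rpow_arith_mean_le_arith_mean_rpow Finset.univ (fun _ => ((m : ℝ))⁻¹) a
    (fun i _ => by positivity) (by simp [Finset.card_univ]; field_simp) (fun i _ => ha i) hq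
  rw [← Finset.mul_sum, ← Finset.mul_sum] at key
  -- key : ((m:ℝ)⁻¹ * ∑ a)^q ≤ (m:ℝ)⁻¹ * ∑ a^q
  have hS : 0 ≤ ∑ i, a i := Finset.sum_nonneg fun i _ => ha i
  have hT : 0 ≤ ∑ i, a i ^ q := Finset.sum_nonneg fun i _ => Real.rpow_nonneg (ha i) q
  have key2 : (((m : ℝ))⁻¹ * ∑ i, a i) ≤ (((m : ℝ))⁻¹ * ∑ i, a i ^ q) ^ (1 / q) := by
    have h1 : ((((m : ℝ))⁻¹ * ∑ i, a i) ^ q) ^ (1 / q) = ((m : ℝ))⁻¹ * ∑ i, a i := by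
      rw [← Real.rpow_mul (by positivity), mul_one_div, div_self hq0, Real.rpow_one]
    rw [← h1]
    exact Real.rpow_le_rpow (Real.rpow_nonneg (by positivity) q) key (by positivity)
  have key3 : (((m : ℝ))⁻¹ * ∑ i, a i ^ q) ^ (1 / q)
      = ((m : ℝ))⁻¹ ^ (1 / q) * (∑ i, a i ^ q) ^ (1 / q) := by
    rw [Real.mul_rpow (by positivity) hT]
  rw [key3] at key2
  have key4 : ∑ i, a i ≤ (m : ℝ) * (((m : ℝ))⁻¹ ^ (1 / q) * (∑ i, a i ^ q) ^ (1 / q)) := by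
    rw [← mul_le_mul_iff_right₀ (show (0:ℝ) < ((m : ℝ))⁻¹ by positivity)]
    calc ((m : ℝ))⁻¹ * ∑ i, a i ≤ ((m : ℝ))⁻¹ ^ (1/q) * (∑ i, a i ^ q) ^ (1/q) := key2
      _ = ((m : ℝ))⁻¹ * ((m : ℝ) * (((m : ℝ))⁻¹ ^ (1 / q) * (∑ i, a i ^ q) ^ (1 / q))) := by
          field_simp
  refine key4.trans (le_of_eq ?_)
  rw [← mul_assoc]
  congr 1
  rw [Real.inv_rpow hM.le, ← Real.rpow_neg hM.le]
  rw [show ((1:ℝ) - 1/q) = 1 + (-(1/q)) by ring, Real.rpow_add hM, Real.rpow_one]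
end MainAux

/-- γ_{(p)}(A) ≥ m^{1/p - 1/2} ‖A‖₁ / √n. -/
theorem gammaP_ge_schatten (m n : ℕ) (p : ℝ) (hp : 2 ≤ p)
    (A : Matrix (Fin m) (Fin n) ℝ) :
    gammaP p A ≥ (m : ℝ) ^ ((1 : ℝ) / p - 1 / 2) * schatten1 A / Real.sqrt n := by
  have hp0 : (0 : ℝ) < p := by linarith
  rw [ge_iff_le, gammaP]
  have hne : { c : ℝ | ∃ (k : ℕ) (L : Matrix (Fin m) (Fin k) ℝ) (R : Matrix (Fin k) (Fin n) ℝ),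
      L * R = A ∧ c = Real.sqrt (trq (p / 2) (L * Lᵀ)) * norm12 R }.Nonempty :=
    ⟨_, n, A, 1, by rw [Matrix.mul_one], rfl⟩
  apply le_csInf hne
  rintro c ⟨k, L, R, hLR, rfl⟩
  have hr : 0 ≤ norm12 R := Real.iSup_nonneg fun j => Real.sqrt_nonneg _
  have hLnn : ∀ i, 0 ≤ (L * Lᵀ) i i := by
    intro i
    rw [Matrix.mul_apply]
    exact Finset.sum_nonneg fun b _ => by
      rw [Matrix.transpose_apply]; exact mul_self_nonneg _
  have htnn : 0 ≤ trq (p / 2) (L * Lᵀ) :=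
    Real.rpow_nonneg (Finset.sum_nonneg fun i _ => Real.rpow_nonneg (hLnn i) _) _
  have hcnn : 0 ≤ Real.sqrt (trq (p / 2) (L * Lᵀ)) * norm12 R :=
    mul_nonneg (Real.sqrt_nonneg _) hr
  rcases Nat.eq_zero_or_pos m with hm | hm
  · subst hm
    have hAA : Aᴴ * A = 0 := by
      ext i j
      simp [Matrix.mul_apply]
    have hs0 : schatten1 A = 0 := by
      rw [schatten1_eq_sum]
      have h0 := (Matrix.IsHermitian.eigenvalues_eq_zero_iff
        (Matrix.posSemidef_conjTranspose_mul_self A).1).2 hAA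
      rw [h0]
      simp
    rw [hs0, mul_zero, zero_div]
    exact hcnn
  rcases Nat.eq_zero_or_pos n with hn | hn
  · subst hn
    rw [Nat.cast_zero, Real.sqrt_zero, div_zero]
    exact hcnn
  -- main case
  have hmR : (0 : ℝ) < (m : ℝ) := by exact_mod_cast hm
  have hnR : (0 : ℝ) < (n : ℝ) := by exact_mod_cast hn
  have hq1 : (1 : ℝ) ≤ p / 2 := by linarith
  -- Step 1 : Frobenius bound
  have step1 : schatten1 A ≤ Real.sqrt (L * Lᴴ).trace * Real.sqrt (Rᴴ * R).trace := by
    rw [← hLR]; exact schatten1_le_frob L R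
  -- Step 2 : trace (L * Lᴴ) vs trq
  have hLL : (L * Lᴴ).trace = ∑ i, (L * Lᵀ) i i := by
    rw [Matrix.trace]
    apply Finset.sum_congr rfl; intro i _
    rw [Matrix.diag_apply, Matrix.conjTranspose_eq_transpose_of_trivial]
  have step2 : (L * Lᴴ).trace
      ≤ (m : ℝ) ^ ((1 : ℝ) - 1 / (p / 2)) * trq (p / 2) (L * Lᵀ) := by
    rw [hLL, trq]
    exact sum_le_rpow_sum hm (fun i => (L * Lᵀ) i i) hLnn hq1
  -- Step 3 : trace (Rᴴ * R) vs norm12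
  have step3 : (Rᴴ * R).trace ≤ (n : ℝ) * norm12 R ^ 2 := by
    have hcol : ∀ j, ∑ i, R i j ^ 2 ≤ norm12 R ^ 2 := by
      intro j
      have h1 : Real.sqrt (∑ i, R i j ^ 2) ≤ norm12 R := by
        rw [norm12]
        exact le_ciSup (f := fun j : Fin n => Real.sqrt (∑ i, R i j ^ 2))
          (Set.Finite.bddAbove (Set.finite_range _)) j
      have h2 : 0 ≤ ∑ i, R i j ^ 2 := Finset.sum_nonneg fun i _ => sq_nonneg _
      calc ∑ i, R i j ^ 2 = Real.sqrt (∑ i, R i j ^ 2) ^ 2 := (Real.sq_sqrt h2).symm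
        _ ≤ norm12 R ^ 2 := by
            apply pow_le_pow_left₀ (Real.sqrt_nonneg _) h1
    have htr : (Rᴴ * R).trace = ∑ j, ∑ i, R i j ^ 2 := by
      rw [Matrix.trace]
      apply Finset.sum_congr rfl; intro j _
      rw [Matrix.diag_apply, Matrix.mul_apply]
      apply Finset.sum_congr rfl; intro i _
      rw [Matrix.conjTranspose_apply, star_trivial, pow_two]
    rw [htr]
    calc ∑ j, ∑ i, R i j ^ 2 ≤ ∑ _j : Fin n, norm12 R ^ 2 :=
          Finset.sum_le_sum fun j _ => hcol j
      _ = (n : ℝ) * norm12 R ^ 2 := by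
          rw [Finset.sum_const, Finset.card_univ, Fintype.card_fin, nsmul_eq_mul]
  -- combine
  have b1 : Real.sqrt (L * Lᴴ).trace
      ≤ (m : ℝ) ^ ((1 : ℝ) / 2 - 1 / p) * Real.sqrt (trq (p / 2) (L * Lᵀ)) := by
    have h1 := Real.sqrt_le_sqrt step2
    rw [Real.sqrt_mul (Real.rpow_nonneg hmR.le _)] at h1
    refine h1.trans (le_of_eq ?_)
    congr 1
    rw [Real.sqrt_eq_rpow, ← Real.rpow_mul hmR.le]
    congr 1
    rw [one_div_div]
    ring
  have b2 : Real.sqrt (Rᴴ * R).trace ≤ Real.sqrt n * norm12 R := by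
    have h1 := Real.sqrt_le_sqrt step3
    rwa [Real.sqrt_mul hnR.le, Real.sqrt_sq hr] at h1
  have hfin : schatten1 A ≤ (m : ℝ) ^ ((1 : ℝ) / 2 - 1 / p) * Real.sqrt n
      * (Real.sqrt (trq (p / 2) (L * Lᵀ)) * norm12 R) := by
    refine step1.trans ?_
    calc Real.sqrt (L * Lᴴ).trace * Real.sqrt (Rᴴ * R).trace
        ≤ ((m : ℝ) ^ ((1 : ℝ) / 2 - 1 / p) * Real.sqrt (trq (p / 2) (L * Lᵀ)))
          * (Real.sqrt n * norm12 R) :=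
          mul_le_mul b1 b2 (Real.sqrt_nonneg _)
            (mul_nonneg (Real.rpow_nonneg hmR.le _) (Real.sqrt_nonneg _))
      _ = _ := by ring
  have hsn : (0 : ℝ) < Real.sqrt n := Real.sqrt_pos.mpr hnR
  rw [div_le_iff₀ hsn]
  calc (m : ℝ) ^ ((1 : ℝ) / p - 1 / 2) * schatten1 A
      ≤ (m : ℝ) ^ ((1 : ℝ) / p - 1 / 2) * ((m : ℝ) ^ ((1 : ℝ) / 2 - 1 / p) * Real.sqrt n
        * (Real.sqrt (trq (p / 2) (L * Lᵀ)) * norm12 R)) :=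
        mul_le_mul_of_nonneg_left hfin (Real.rpow_nonneg hmR.le _)
    _ = ((m : ℝ) ^ ((1 : ℝ) / p - 1 / 2) * (m : ℝ) ^ ((1 : ℝ) / 2 - 1 / p))
        * (Real.sqrt (trq (p / 2) (L * Lᵀ)) * norm12 R) * Real.sqrt n := by ring
    _ = Real.sqrt (trq (p / 2) (L * Lᵀ)) * norm12 R * Real.sqrt n := by
        rw [← Real.rpow_add hmR]
        norm_num
end
end
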